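/- A left head variable free ATRS R is terminating if and only if the TRS U↓(R) = R_η↓ ∪ U(R) is terminating. -/

import Mathlib

/-- First-order terms over a signature `F` with arity function `ar` and variables `V`. -/
inductive Term (F : Type) (ar : F → ℕ) (V : Type) : Type where
  | var : V → Term F ar V
  | app : (f : F) → (Fin (ar f) → Term F ar V) → Term F ar V

namespace Term

variable {F V : Type} {ar : F → ℕ}

/-- Application of a substitution. -/
def subst (σ : V → Term F ar V) : Term F ar V → Term F ar V
  | .var x => σ x
  | .app f ts => .app f (fun i => (ts i).subst σ)

/-- Size of a term. -/
def size : Term F ar V → ℕ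
  | .var _ => 1
  | .app _ ts => 1 + ∑ i, (ts i).size

end Term

section Rewriting

variable {F V : Type} {ar : F → ℕ}

/-- The (reflexive) subterm relation: `Subterm u t` means `u` occurs in `t`. -/
inductive Subterm : Term F ar V → Term F ar V → Prop where
  | refl (t) : Subterm t t
  | app (f) (ts : Fin (ar f) → Term F ar V) (i) (u) :
      Subterm u (ts i) → Subterm u (.app f ts)

/-- Proper subterm: `PSub u t` means `u` is a proper subterm of `t`. -/
def PSub (u t : Term F ar V) : Prop :=
  ∃ (f : F) (ts : Fin (ar f) → Term F ar V) (i : Fin (ar f)),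
    t = Term.app f ts ∧ Subterm u (ts i)

/-- One-step rewrite relation of a TRS `R`: closure of the rules under
contexts and substitutions. -/
inductive Rew (R : Set (Term F ar V × Term F ar V)) : Term F ar V → Term F ar V → Prop where
  | rule (l r : Term F ar V) (σ : V → Term F ar V) :
      (l, r) ∈ R → Rew R (l.subst σ) (r.subst σ)
  | congr (f : F) (ts : Fin (ar f) → Term F ar V) (i : Fin (ar f)) (u : Term F ar V) :
      Rew R (ts i) u → Rew R (.app f ts) (.app f (Function.update ts i u))

/-- Many-step rewriting. -/
def RStar (R : Set (Term F ar V × Term F ar V)) : Term F ar V → Term F ar V → Prop :=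
  Relation.ReflTransGen (Rew R)

/-- Normal forms. -/
def NF (R : Set (Term F ar V × Term F ar V)) (t : Term F ar V) : Prop := ∀ u, ¬ Rew R t u

/-- `t` rewrites to the normal form `u` (w.r.t. `R`). -/
def NormTo (R : Set (Term F ar V × Term F ar V)) (t u : Term F ar V) : Prop :=
  RStar R t u ∧ NF R u

/-- Termination: the rewrite relation is well-founded. -/
def Terminating (R : Set (Term F ar V × Term F ar V)) : Prop :=
  WellFounded (fun t s => Rew R s t)

/-- Confluence. -/
def Confluent (R : Set (Term F ar V × Term F ar V)) : Prop :=
  ∀ s t u, RStar R s t → RStar R s u → ∃ v, RStar R t v ∧ RStar R u v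

/-- Innermost one-step rewriting: the contracted redex has only normal
proper subterms. -/
inductive IRew (R : Set (Term F ar V × Term F ar V)) : Term F ar V → Term F ar V → Prop where
  | rule (l r : Term F ar V) (σ : V → Term F ar V) :
      (l, r) ∈ R → (∀ u, PSub u (l.subst σ) → NF R u) →
      IRew R (l.subst σ) (r.subst σ)
  | congr (f : F) (ts : Fin (ar f) → Term F ar V) (i : Fin (ar f)) (u : Term F ar V) :
      IRew R (ts i) u → IRew R (.app f ts) (.app f (Function.update ts i u))

/-- Innermost termination. -/
def ITerminating (R : Set (Term F ar V × Term F ar V)) : Prop :=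
  WellFounded (fun t s => IRew R s t)

/-- `m`-fold composition of a relation. -/
def RelPow (r : α → α → Prop) : ℕ → α → α → Prop
  | 0 => Eq
  | n + 1 => fun a c => ∃ b, r a b ∧ RelPow r n b c

/-- Derivation height of `t` w.r.t. a relation. -/
noncomputable def dh (r : α → α → Prop) (t : α) : ℕ :=
  sSup { m | ∃ u, RelPow r m t u }

/-- Derivational complexity w.r.t. a relation, restricted to starting terms
satisfying `P`. -/
noncomputable def dcOn {F V : Type} {ar : F → ℕ}
    (r : Term F ar V → Term F ar V → Prop) (P : Term F ar V → Prop) (n : ℕ) : ℕ :=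
  sSup { m | ∃ t, P t ∧ t.size ≤ n ∧ m = dh r t }

/-- `f ∈ O(g)`. -/
def BigO (f g : ℕ → ℕ) : Prop := ∃ M N : ℕ, ∀ n, f n ≤ M * g n + N

end Rewriting
section ATRS

/-- Signature for (un)curried applicative systems: `none` is the binary
application symbol `∘`, and `some (c, i)` is the symbol `c_i` of arity `i`
(with `c_0 = c` an applicative constant). -/
abbrev USig (C : Type) := Option (C × ℕ)

/-- Arity function for `USig`. -/
def uar {C : Type} : USig C → ℕ
  | none => 2
  | some (_, i) => i

/-- Terms over the signature `USig C` (variables are natural numbers). -/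
abbrev ATerm (C : Type) := Term (USig C) uar ℕ

variable {C : Type}

/-- Binary application `s ∘ t`. -/
def appT (s t : ATerm C) : ATerm C :=
  .app none (fun i => if i.1 = 0 then s else t)

/-- The applicative constant `c` (i.e. `c_0`). -/
def constT (c : C) : ATerm C :=
  .app (some (c, 0)) (fun i => (Nat.not_lt_zero _ i.isLt).elim)

/-- Symbols of a purely applicative term: only `∘` and constants `c_0`. -/
def ApplicativeSym : USig C → Prop
  | none => True
  | some (_, i) => i = 0

/-- A term over the applicative signature (constants plus `∘`). -/
def ApplicativeT (t : ATerm C) : Prop :=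
  ∀ (u : ATerm C) (f : USig C) (ts : Fin (uar f) → ATerm C),
    Subterm u t → u = Term.app f ts → ApplicativeSym f

/-- `headCount t = some (c, n)` iff `t = c ∘ t₁ ∘ ⋯ ∘ tₙ` for some terms `tᵢ`. -/
def headCount : ATerm C → Option (C × ℕ)
  | .var _ => none
  | .app none ts => (headCount (ts ⟨0, by simp [uar]⟩)).map (fun p => (p.1, p.2 + 1))
  | .app (some (_, _ + 1)) _ => none
  | .app (some (c, 0)) _ => some (c, 0)

/-- The spine `c ∘ t₁ ∘ ⋯ ∘ tₙ` occurs as a subterm of a left- or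
right-hand side of `R`. -/
def SpineIn (R : Set (ATerm C × ATerm C)) (c : C) (n : ℕ) : Prop :=
  ∃ p ∈ R, ∃ t : ATerm C, (Subterm t p.1 ∨ Subterm t p.2) ∧ headCount t = some (c, n)

/-- `aa` is the applicative-arity function of `R`: `aa c` is the maximal `n`
such that `c ∘ t₁ ∘ ⋯ ∘ tₙ` occurs in a rule of `R` (and `0` if `c` does not
occur applied). -/
def AASpec (R : Set (ATerm C × ATerm C)) (aa : C → ℕ) : Prop :=
  ∀ c : C, (∀ n, SpineIn R c n → n ≤ aa c) ∧ (aa c = 0 ∨ SpineIn R c (aa c))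

/-- A term is head variable free if no subterm is of the form `x ∘ v` with
`x` a variable. -/
def HeadVarFree (t : ATerm C) : Prop :=
  ∀ u : ATerm C, Subterm u t → ∀ (x : ℕ) (v : ATerm C), u ≠ appT (.var x) v

/-- Basic well-formedness of an applicative TRS: left-hand sides are not
variables, right-hand side variables occur on the left, and both sides are
applicative terms. -/
def IsATRS (R : Set (ATerm C × ATerm C)) : Prop :=
  ∀ p ∈ R, (∀ x : ℕ, p.1 ≠ Term.var x) ∧
    (∀ x : ℕ, Subterm (.var x) p.2 → Subterm (.var x) p.1) ∧
    ApplicativeT p.1 ∧ ApplicativeT p.2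

/-- `R` is left head variable free. -/
def LHVF (R : Set (ATerm C × ATerm C)) : Prop := ∀ p ∈ R, HeadVarFree p.1

/-- The variables `x_0, …, x_{i-1}`. -/
def uvars (i : ℕ) : Fin i → ATerm C := fun j => .var j.1

/-- The term `f_i(x_0,…,x_{i-1})`. -/
def fiT (c : C) (i : ℕ) : ATerm C := .app (some (c, i)) (fun j => .var j.1)

/-- The uncurrying system `U`, with rules
`c_i(x_1,…,x_i) ∘ y → c_{i+1}(x_1,…,x_i,y)` for all `0 ≤ i < aa c`. -/
def USys (aa : C → ℕ) : Set (ATerm C × ATerm C) :=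
  { p | ∃ (c : C) (i : ℕ), i < aa c ∧
      p = (appT (fiT c i) (.var i), fiT c (i + 1)) }

/-- The currying system `C(F)` (for a signature with arities `arF`), with
rules `f_{i+1}(x_1,…,x_i,y) → f_i(x_1,…,x_i) ∘ y` for all `0 ≤ i < arF f`
(where `f_{arF f}` plays the role of `f`). -/
def CurrySys {F : Type} (arF : F → ℕ) : Set (ATerm F × ATerm F) :=
  { p | ∃ (f : F) (i : ℕ), i < arF f ∧
      p = (fiT f (i + 1), appT (fiT f i) (.var i)) }

/-- The η-saturation `R_η` of `R` (w.r.t. applicative arities `aa`). -/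
inductive Eta (aa : C → ℕ) (R : Set (ATerm C × ATerm C)) : ATerm C × ATerm C → Prop where
  | base (p) : p ∈ R → Eta aa R p
  | eta (l r : ATerm C) (c : C) (n x : ℕ) :
      Eta aa R (l, r) → headCount l = some (c, n) → n < aa c →
      ¬ Subterm (.var x) l → ¬ Subterm (.var x) r →
      Eta aa R (appT l (.var x), appT r (.var x))

/-- The uncurried system `R_η↓`: the rules of `R_η` with both sides in
`U`-normal form. -/
def EtaDown (aa : C → ℕ) (R : Set (ATerm C × ATerm C)) : Set (ATerm C × ATerm C) :=
  { p | ∃ l r : ATerm C, Eta aa R (l, r) ∧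
      NormTo (USys aa) l p.1 ∧ NormTo (USys aa) r p.2 }

/-- The transformed system `U↓(R) = R_η↓ ∪ U(R)`. -/
def UD (aa : C → ℕ) (R : Set (ATerm C × ATerm C)) : Set (ATerm C × ATerm C) :=
  EtaDown aa R ∪ USys aa

/-- Symbols of the signature of `U↓(R)`: `∘` and `c_i` with `i ≤ aa c`. -/
def GoodSym (aa : C → ℕ) : USig C → Prop
  | none => True
  | some (c, i) => i ≤ aa c

/-- A term over the signature of `U↓(R)`. -/
def GoodTerm (aa : C → ℕ) (t : ATerm C) : Prop :=
  ∀ (u : ATerm C) (f : USig C) (ts : Fin (uar f) → ATerm C),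
    Subterm u t → u = Term.app f ts → GoodSym aa f

/-- `C'`: curry a term over the signature of `U↓(R)` and identify all
symbols `c_i` originating from the same constant `c`. -/
def curryId : ATerm C → ATerm C
  | .var x => .var x
  | .app none ts => appT (curryId (ts ⟨0, by simp [uar]⟩)) (curryId (ts ⟨1, by simp [uar]⟩))
  | .app (some (c, i)) ts =>
      (List.ofFn (fun j : Fin (uar (some (c, i))) => curryId (ts j))).foldl appT (constT c)

end ATRS

namespace UC
open Term
variable {C : Type}

lemma fin2_eta (ts : Fin 2 → ATerm C) :
    Term.app (ar := uar) none ts = appT (ts ⟨0, by simp [uar]⟩) (ts ⟨1, by simp [uar]⟩) := by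
  show _ = Term.app none _
  congr 1
  funext j
  match j with
  | ⟨0, _⟩ => simp
  | ⟨1, _⟩ => simp

-- substitution composition
lemma subst_subst {F V : Type} {ar : F → ℕ} (t : Term F ar V) (σ τ : V → Term F ar V) :
    (t.subst σ).subst τ = t.subst (fun x => (σ x).subst τ) := by
  induction t with
  | var x => rfl
  | app f ts ih => simp only [Term.subst]; congr 1; funext i; exact ih i

lemma update_subst {F V : Type} {ar : F → ℕ} {f : F}
    (ts : Fin (ar f) → Term F ar V) (i : Fin (ar f)) (u : Term F ar V) (σ : V → Term F ar V) :
    (fun j => (Function.update ts i u j).subst σ)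
      = Function.update (fun j => (ts j).subst σ) i (u.subst σ) := by
  funext j
  by_cases h : j = i
  · subst h; simp
  · simp [Function.update, h]

lemma Rew.subst_closed {F V : Type} {ar : F → ℕ} {R : Set (Term F ar V × Term F ar V)}
    {s t : Term F ar V} (h : Rew R s t) (σ : V → Term F ar V) :
    Rew R (s.subst σ) (t.subst σ) := by
  induction h with
  | rule l r τ hm =>
      rw [subst_subst, subst_subst]
      exact Rew.rule l r _ hm
  | congr f ts i u hs ih =>
      show Rew R (Term.app f fun j => (ts j).subst σ) _
      have := Rew.congr (R := R) f (fun j => (ts j).subst σ) i (u.subst σ) ih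
      rwa [show (Term.app f (Function.update ts i u)).subst σ
          = Term.app f (Function.update (fun j => (ts j).subst σ) i (u.subst σ)) from by
        simp only [Term.subst]; rw [update_subst]]

-- lifting of steps through a single-position context
lemma Rew.congr_update {F V : Type} {ar : F → ℕ} {R : Set (Term F ar V × Term F ar V)}
    {f : F} {ts : Fin (ar f) → Term F ar V} {i : Fin (ar f)} {a b : Term F ar V}
    (hai : ts i = a) (h : Rew R a b) :
    Rew R (Term.app f ts) (Term.app f (Function.update ts i b)) := by
  subst hai; exact Rew.congr f ts i b h

lemma TransGen.congr_lift {F V : Type} {ar : F → ℕ} {R : Set (Term F ar V × Term F ar V)}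
    {f : F} {ts : Fin (ar f) → Term F ar V} {i : Fin (ar f)} {b : Term F ar V}
    (h : Relation.TransGen (Rew R) (ts i) b) :
    Relation.TransGen (Rew R) (Term.app f ts) (Term.app f (Function.update ts i b)) := by
  have key : ∀ a c, Relation.TransGen (Rew R) a c →
      Relation.TransGen (Rew R) (Term.app f (Function.update ts i a))
        (Term.app f (Function.update ts i c)) := by
    intro a c h
    refine Relation.TransGen.lift (fun x => Term.app f (Function.update ts i x)) ?_ _ _ h
    intro x y hxy
    have := Rew.congr (R := R) f (Function.update ts i x) i y
      (by rwa [Function.update_self])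
    rwa [Function.update_idem] at this
  have := key (ts i) b h
  rwa [Function.update_eq_self] at this

lemma RStar.congr_lift {F V : Type} {ar : F → ℕ} {R : Set (Term F ar V × Term F ar V)}
    {f : F} {ts : Fin (ar f) → Term F ar V} {i : Fin (ar f)} {b : Term F ar V}
    (h : RStar R (ts i) b) :
    RStar R (Term.app f ts) (Term.app f (Function.update ts i b)) := by
  rcases (Relation.reflTransGen_iff_eq_or_transGen.mp h) with h | h
  · subst h; rw [Function.update_eq_self]; exact Relation.ReflTransGen.refl
  · exact (TransGen.congr_lift h).to_reflTransGen

/-- pointwise RStar on all arguments -/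
lemma RStar.app_all {F V : Type} {ar : F → ℕ} {R : Set (Term F ar V × Term F ar V)}
    {f : F} {ts us : Fin (ar f) → Term F ar V}
    (h : ∀ i, RStar R (ts i) (us i)) :
    RStar R (Term.app f ts) (Term.app f us) := by
  have key : ∀ k : ℕ, RStar R (Term.app f ts)
      (Term.app f (fun j => if j.1 < k then us j else ts j)) := by
    intro k
    induction k with
    | zero =>
        have : (fun j : Fin (ar f) => if j.1 < 0 then us j else ts j) = ts := by
          funext j; simp
        rw [this]; exact Relation.ReflTransGen.refl
    | succ k ih =>
        by_cases hk : k < ar f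
        · have step : RStar R (Term.app f (fun j => if j.1 < k then us j else ts j))
              (Term.app f (Function.update (fun j => if j.1 < k then us j else ts j) ⟨k, hk⟩ (us ⟨k, hk⟩))) := by
            refine RStar.congr_lift ?_
            simpa using h ⟨k, hk⟩
          have eqn : Function.update (fun j : Fin (ar f) => if j.1 < k then us j else ts j) ⟨k, hk⟩ (us ⟨k, hk⟩)
              = fun j => if j.1 < k + 1 then us j else ts j := by
            funext j
            by_cases hj : j = ⟨k, hk⟩
            · subst hj; simp
            · have hj' : j.1 ≠ k := fun hh => hj (Fin.ext hh)
              rw [Function.update_of_ne hj]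
              by_cases h1 : j.1 < k
              · rw [if_pos h1, if_pos (by omega)]
              · rw [if_neg h1, if_neg (by omega)]
          rw [eqn] at step
          exact ih.trans step
        · have : (fun j : Fin (ar f) => if j.1 < k + 1 then us j else ts j)
              = fun j => if j.1 < k then us j else ts j := by
            funext j; have := j.2; by_cases h1 : j.1 < k
            · rw [if_pos h1, if_pos (by omega)]
            · rw [if_neg h1, if_neg (by omega)]
          rw [this]; exact ih
  have := key (ar f)
  have eqn : (fun j : Fin (ar f) => if j.1 < ar f then us j else ts j) = us := by
    funext j; rw [if_pos j.2]
  rwa [eqn] at this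

lemma RStar.subst_closed {F V : Type} {ar : F → ℕ} {R : Set (Term F ar V × Term F ar V)}
    {s t : Term F ar V} (h : RStar R s t) (σ : V → Term F ar V) :
    RStar R (s.subst σ) (t.subst σ) :=
  Relation.ReflTransGen.lift (r := Rew R) (p := Rew R) (fun x => x.subst σ)
    (fun _ _ hxy => Rew.subst_closed hxy σ) _ _ h

lemma RStar.subst_pointwise {F V : Type} {ar : F → ℕ} {R : Set (Term F ar V × Term F ar V)}
    (t : Term F ar V) {σ τ : V → Term F ar V} (h : ∀ x, RStar R (σ x) (τ x)) :
    RStar R (t.subst σ) (t.subst τ) := by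
  induction t with
  | var x => exact h x
  | app f ts ih =>
      show RStar R (Term.app f fun i => (ts i).subst σ) (Term.app f fun i => (ts i).subst τ)
      exact RStar.app_all ih

lemma Rew.mono {F V : Type} {ar : F → ℕ} {R S : Set (Term F ar V × Term F ar V)}
    (hRS : R ⊆ S) {s t : Term F ar V} (h : Rew R s t) : Rew S s t := by
  induction h with
  | rule l r σ hm => exact Rew.rule l r σ (hRS hm)
  | congr f ts i u _ ih => exact Rew.congr f ts i u ih

/-! ### variables, freshness -/

def varBound : ATerm C → ℕ
  | .var x => x + 1
  | .app _ ts => Finset.univ.sup (fun i => varBound (ts i))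

lemma lt_varBound {t : ATerm C} {x : ℕ} (h : Subterm (Term.var x) t) : x < varBound t := by
  induction t with
  | var y =>
      cases h with
      | refl => simp [varBound]
  | app f ts ih =>
      cases h with
      | app _ _ i _ hsub =>
          have := ih i hsub
          calc x < varBound (ts i) := this
            _ ≤ _ := Finset.le_sup (f := fun i => varBound (ts i)) (Finset.mem_univ i)

lemma not_subterm_varBound (t : ATerm C) {x : ℕ} (h : varBound t ≤ x) :
    ¬ Subterm (Term.var x) t := fun hs => absurd (lt_varBound hs) (by omega)

lemma subst_eq_on {F V : Type} {ar : F → ℕ} (t : Term F ar V) {σ τ : V → Term F ar V}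
    (h : ∀ x, Subterm (Term.var x) t → σ x = τ x) : t.subst σ = t.subst τ := by
  induction t with
  | var x => exact h x (Subterm.refl _)
  | app f ts ih =>
      show Term.app f _ = Term.app f _
      congr 1; funext i
      exact ih i (fun x hx => h x (Subterm.app f ts i _ hx))

/-! ### size and termination of U -/

lemma size_pos {F V : Type} {ar : F → ℕ} (t : Term F ar V) : 0 < t.size := by
  cases t <;> simp [Term.size]

lemma appT_subst (a b : ATerm C) (σ : ℕ → ATerm C) :
    (appT a b).subst σ = appT (a.subst σ) (b.subst σ) := by
  show Term.app none _ = Term.app none _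
  congr 1; funext i
  by_cases h : i.1 = 0 <;> simp [h]

lemma size_appT (a b : ATerm C) : (appT a b).size = 1 + a.size + b.size := by
  have h : (appT a b).size
      = 1 + ∑ i : Fin 2, (if (i : ℕ) = 0 then a else b).size := rfl
  rw [h, Fin.sum_univ_two]
  norm_num [Nat.add_assoc]

lemma size_fiT_subst (c : C) (i : ℕ) (σ : ℕ → ATerm C) :
    ((fiT c i).subst σ).size = 1 + ∑ j : Fin i, (σ j.1).size := by
  show 1 + _ = _
  congr 1

lemma rew_U_size {aa : C → ℕ} {s t : ATerm C} (h : Rew (USys aa) s t) :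
    t.size < s.size := by
  induction h with
  | rule l r σ hm =>
      obtain ⟨c, i, hi, hp⟩ := hm
      obtain ⟨hl, hr⟩ := Prod.mk.injEq .. ▸ hp
      subst hl; subst hr
      rw [appT_subst, size_appT, size_fiT_subst,
        show ((Term.var i : ATerm C).subst σ) = σ i from rfl, size_fiT_subst,
        Fin.sum_univ_castSucc]
      simp only [Fin.coe_castSucc, Fin.val_last]
      omega
  | congr f ts i u _ ih =>
      show 1 + _ < 1 + _
      have e : ∀ j, (Function.update ts i u j).size
          = Function.update (fun j => (ts j).size) i u.size j := by
        intro j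
        by_cases hj : j = i
        · subst hj; simp
        · simp [Function.update_of_ne hj]
      have h1 : ∑ j, (Function.update ts i u j).size
          = u.size + ∑ x ∈ Finset.univ \ {i}, (ts x).size := by
        simp only [e]
        rw [Finset.sum_update_of_mem (Finset.mem_univ i)]
      have h2 : ∑ j, (ts j).size
          = (∑ x ∈ Finset.univ \ {i}, (ts x).size) + (ts i).size := by
        rw [Finset.sum_eq_sum_sdiff_singleton_add (Finset.mem_univ i)]
      omega

lemma wf_U (aa : C → ℕ) : Terminating (USys (C := C) aa) := by
  have : ∀ t s : ATerm C, Rew (USys aa) s t → t.size < s.size := fun t s h => rew_U_size h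
  exact Subrelation.wf (fun h => this _ _ h) (InvImage.wf Term.size Nat.lt_wfRel.wf)

/-! ### the normal form function for U -/

def extApp {i : ℕ} (us : Fin i → ATerm C) (w : ATerm C) : Fin (i + 1) → ATerm C :=
  fun j => if h : j.1 < i then us ⟨j.1, h⟩ else w

def napp (aa : C → ℕ) (x w : ATerm C) : ATerm C :=
  match x with
  | .app (some (c, i)) us =>
      if i < aa c then .app (some (c, i + 1)) (extApp us w) else appT x w
  | _ => appT x w

lemma napp_var (aa : C → ℕ) (y : ℕ) (w : ATerm C) :
    napp aa (.var y) w = appT (.var y) w := rfl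

lemma napp_none (aa : C → ℕ) (ts : Fin (uar (none : USig C)) → ATerm C) (w : ATerm C) :
    napp aa (.app none ts) w = appT (.app none ts) w := rfl

lemma napp_some (aa : C → ℕ) (c : C) (i : ℕ)
    (us : Fin (uar (some (c, i))) → ATerm C) (w : ATerm C) :
    napp aa (.app (some (c, i)) us) w =
      if i < aa c then .app (some (c, i + 1)) (extApp us w)
      else appT (.app (some (c, i)) us) w := rfl

def norm (aa : C → ℕ) : ATerm C → ATerm C
  | .var x => .var x
  | .app none ts => napp aa (norm aa (ts ⟨0, by simp [uar]⟩)) (norm aa (ts ⟨1, by simp [uar]⟩))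
  | .app (some p) ts => .app (some p) (fun i => norm aa (ts i))

lemma norm_var (aa : C → ℕ) (x : ℕ) : norm aa (.var x : ATerm C) = .var x := rfl

lemma norm_none (aa : C → ℕ) (ts : Fin (uar (none : USig C)) → ATerm C) :
    norm aa (.app none ts)
      = napp aa (norm aa (ts ⟨0, by simp [uar]⟩)) (norm aa (ts ⟨1, by simp [uar]⟩)) := by
  rw [norm]

lemma norm_some (aa : C → ℕ) (p : C × ℕ) (ts : Fin (uar (some p)) → ATerm C) :
    norm aa (.app (some p) ts) = .app (some p) (fun i => norm aa (ts i)) := by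
  rw [norm]

lemma norm_appT (aa : C → ℕ) (a b : ATerm C) :
    norm aa (appT a b) = napp aa (norm aa a) (norm aa b) := by
  rw [show appT a b = Term.app none (fun i => if i.1 = 0 then a else b) from rfl, norm_none]
  norm_num

/-- case analysis for `napp` -/
lemma napp_cases (aa : C → ℕ) (x w : ATerm C) :
    (∃ (c : C) (i : ℕ) (us : Fin i → ATerm C),
        x = .app (some (c, i)) us ∧ i < aa c ∧
        napp aa x w = .app (some (c, i + 1)) (extApp us w)) ∨
    (napp aa x w = appT x w ∧
      ∀ (c : C) (i : ℕ) (us : Fin (uar (some (c, i))) → ATerm C),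
        x = .app (some (c, i)) us → ¬ i < aa c) := by
  match x with
  | .var y => right; exact ⟨rfl, by intro c i us h; cases h⟩
  | .app none ts => right; exact ⟨rfl, by intro c i us h; cases h⟩
  | .app (some (c, i)) us =>
      by_cases h : i < aa c
      · left; exact ⟨c, i, us, rfl, h, by rw [napp_some, if_pos h]⟩
      · right
        constructor
        · rw [napp_some, if_neg h]
        · intro c' i' us' he
          cases he
          exact h

/-- the absorption step is a `U`-step -/
lemma U_absorb {aa : C → ℕ} {c : C} {i : ℕ} (h : i < aa c)
    (us : Fin i → ATerm C) (w : ATerm C) :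
    Rew (USys aa) (appT (.app (some (c, i)) us) w) (.app (some (c, i + 1)) (extApp us w)) := by
  classical
  set σ : ℕ → ATerm C := fun n => if hn : n < i then us ⟨n, hn⟩ else w with hσ
  have ha : (fiT c i).subst σ = Term.app (some (c, i)) us := by
    show Term.app (some (c, i)) _ = _
    congr 1
    funext j
    show σ j.1 = us j
    simp only [hσ]
    exact dif_pos (show (j : ℕ) < i from j.2)
  have hb : σ i = w := by simp [hσ]
  have hl : (appT (fiT c i) (.var i)).subst σ = appT (.app (some (c, i)) us) w := by
    rw [appT_subst, ha, show (Term.var i : ATerm C).subst σ = σ i from rfl, hb]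
  have hr : (fiT c (i + 1)).subst σ = Term.app (some (c, i + 1)) (extApp us w) := by
    show Term.app (some (c, i + 1)) _ = _
    congr 1
  have := Rew.rule (R := USys aa) (appT (fiT c i) (.var i)) (fiT c (i + 1)) σ
    ⟨c, i, h, rfl⟩
  rwa [hl, hr] at this

lemma rstar_napp (aa : C → ℕ) (x w : ATerm C) :
    RStar (USys aa) (appT x w) (napp aa x w) := by
  rcases napp_cases aa x w with ⟨c, i, us, hx, hi, he⟩ | ⟨he, _⟩
  · subst hx
    rw [he]
    exact Relation.ReflTransGen.single (U_absorb hi us w)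
  · rw [he]
    exact Relation.ReflTransGen.refl

lemma appT_eta (ts : Fin (uar (none : USig C)) → ATerm C) :
    Term.app none ts = appT (ts ⟨0, by simp [uar]⟩) (ts ⟨1, by simp [uar]⟩) := by
  show Term.app none ts = Term.app none _
  congr 1
  funext j
  match j with
  | ⟨0, _⟩ => simp
  | ⟨1, _⟩ => simp

lemma rstar_norm (aa : C → ℕ) (t : ATerm C) : RStar (USys aa) t (norm aa t) := by
  induction t with
  | var x => exact Relation.ReflTransGen.refl
  | app f ts ih =>
      match f with
      | none =>
          rw [norm_none]
          have h1 : RStar (USys aa) (Term.app none ts)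
              (Term.app none (fun i => norm aa (ts i))) := RStar.app_all ih
          have h2 := appT_eta (fun i => norm aa (ts i))
          refine h1.trans ?_
          rw [h2]
          exact rstar_napp aa _ _
      | some p =>
          rw [norm_some]
          exact RStar.app_all ih

/-- `norm` is invariant under `U`-steps -/
lemma rew_U_norm {aa : C → ℕ} {s t : ATerm C} (h : Rew (USys aa) s t) :
    norm aa s = norm aa t := by
  induction h with
  | rule l r σ hm =>
      obtain ⟨c, i, hi, hp⟩ := hm
      obtain ⟨hl, hr⟩ := Prod.mk.injEq .. ▸ hp
      subst hl; subst hr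
      rw [appT_subst, norm_appT]
      have h1 : (fiT c i).subst σ = Term.app (some (c, i)) (fun j : Fin i => σ j.1) := rfl
      have h2 : norm aa ((fiT c i).subst σ)
          = Term.app (some (c, i)) (fun j : Fin i => norm aa (σ j.1)) := by
        rw [h1]
        exact norm_some aa (c, i) _
      rw [h2]
      have h3 : ((Term.var i : ATerm C).subst σ) = σ i := rfl
      rw [h3]
      rw [napp_some aa c i (fun j : Fin i => norm aa (σ j.1)) (norm aa (σ i)), if_pos hi]
      show _ = norm aa ((fiT c (i+1)).subst σ)
      have h4 : norm aa ((fiT c (i+1)).subst σ)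
          = Term.app (some (c, i + 1)) (fun j : Fin (i+1) => norm aa (σ j.1)) := by
        rw [show (fiT c (i+1)).subst σ
          = Term.app (some (c, i+1)) (fun j : Fin (i+1) => σ j.1) from rfl]
        exact norm_some aa (c, i + 1) _
      rw [h4]
      congr 1
      funext j
      show extApp (fun j : Fin i => norm aa (σ j.1)) (norm aa (σ i)) j = _
      rw [extApp]
      by_cases hj : j.1 < i
      · rw [dif_pos hj]
      · rw [dif_neg hj]
        have : j.1 = i := by omega
        rw [this]
  | congr f ts i u hu ih =>
      match f with
      | none =>
          rw [norm_none, norm_none]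
          match i with
          | ⟨0, h0⟩ =>
              have e0 : (Function.update ts ⟨0, h0⟩ u) ⟨0, by simp [uar]⟩ = u :=
                Function.update_self _ _ _
              have e1 : (Function.update ts ⟨0, h0⟩ u) ⟨1, by simp [uar]⟩
                  = ts ⟨1, by simp [uar]⟩ :=
                Function.update_of_ne
                  (fun hh => absurd (congrArg Fin.val hh) (by norm_num)) _ _
              rw [e0, e1]
              exact congrArg₂ (napp aa) ih rfl
          | ⟨1, h1⟩ =>
              have e0 : (Function.update ts ⟨1, h1⟩ u) ⟨0, by simp [uar]⟩
                  = ts ⟨0, by simp [uar]⟩ :=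
                Function.update_of_ne
                  (fun hh => absurd (congrArg Fin.val hh) (by norm_num)) _ _
              have e1 : (Function.update ts ⟨1, h1⟩ u) ⟨1, by simp [uar]⟩ = u :=
                Function.update_self _ _ _
              rw [e0, e1]
              exact congrArg₂ (napp aa) rfl ih
      | some p =>
          rw [norm_some, norm_some]
          congr 1
          funext j
          by_cases hj : j = i
          · subst hj; simp only [Function.update_self]; exact ih
          · rw [Function.update_of_ne hj]

lemma rstar_U_norm {aa : C → ℕ} {s t : ATerm C} (h : RStar (USys aa) s t) :
    norm aa s = norm aa t := by
  induction h with
  | refl => rfl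
  | tail _ hstep ih => exact ih.trans (rew_U_norm hstep)

lemma norm_idem (aa : C → ℕ) (t : ATerm C) : norm aa (norm aa t) = norm aa t :=
  (rstar_U_norm (rstar_norm aa t)).symm

/-! ### subterm facts -/

lemma subterm_trans {F V : Type} {ar : F → ℕ} {a b c : Term F ar V}
    (h1 : Subterm a b) (h2 : Subterm b c) : Subterm a c := by
  induction h2 with
  | refl => exact h1
  | app f ts i u _ ih => exact Subterm.app f ts i a (ih h1)

lemma appT_comp0 (a b : ATerm C) :
    (fun i : Fin (uar (none : USig C)) => if i.1 = 0 then a else b) ⟨0, by simp [uar]⟩ = a := by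
  simp

lemma appT_comp1 (a b : ATerm C) :
    (fun i : Fin (uar (none : USig C)) => if i.1 = 0 then a else b) ⟨1, by simp [uar]⟩ = b := by
  simp

lemma subterm_appT_elim {u a b : ATerm C} (h : Subterm u (appT a b)) :
    u = appT a b ∨ Subterm u a ∨ Subterm u b := by
  cases h with
  | refl => left; rfl
  | app f ts i _ hsub =>
      right
      match i with
      | ⟨0, h0⟩ =>
          left
          have : (fun i : Fin (uar (none : USig C)) => if i.1 = 0 then a else b) ⟨0, h0⟩ = a := by
            simp
          rwa [this] at hsub
      | ⟨1, h1⟩ =>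
          right
          have : (fun i : Fin (uar (none : USig C)) => if i.1 = 0 then a else b) ⟨1, h1⟩ = b := by
            simp
          rwa [this] at hsub

lemma subterm_appT_left (a b : ATerm C) : Subterm a (appT a b) := by
  have := Subterm.app (ar := uar) none (fun i => if i.1 = 0 then a else b)
    ⟨0, by simp [uar]⟩ a (by exact Subterm.refl a)
  exact this

lemma subterm_appT_right (a b : ATerm C) : Subterm b (appT a b) := by
  have := Subterm.app (ar := uar) none (fun i => if i.1 = 0 then a else b)
    ⟨1, by simp [uar]⟩ b (by exact Subterm.refl b)
  exact this

/-! ### normal forms of U -/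

def UNF (aa : C → ℕ) (t : ATerm C) : Prop :=
  ∀ ts : Fin (uar (none : USig C)) → ATerm C, Subterm (.app none ts) t →
    ∀ (c : C) (i : ℕ) (us : Fin (uar (some (c, i))) → ATerm C),
      ts ⟨0, by simp [uar]⟩ = .app (some (c, i)) us → ¬ i < aa c

lemma UNF_subterm {aa : C → ℕ} {s t : ATerm C} (h : UNF aa t) (hs : Subterm s t) :
    UNF aa s := fun ts hsub c i us he => h ts (subterm_trans hsub hs) c i us he

lemma not_UNF_of_rew {aa : C → ℕ} {t u : ATerm C} (h : Rew (USys aa) t u) :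
    ¬ UNF aa t := by
  induction h with
  | rule l r σ hm =>
      obtain ⟨c, i, hi, hp⟩ := hm
      obtain ⟨hl, hr⟩ := Prod.mk.injEq .. ▸ hp
      subst hl; subst hr
      intro hU
      have he : (appT (fiT c i) (.var i)).subst σ
          = appT ((fiT c i).subst σ) ((Term.var i : ATerm C).subst σ) := appT_subst _ _ _
      refine hU (fun j => if j.1 = 0 then (fiT c i).subst σ
          else (Term.var i : ATerm C).subst σ) ?_ c i
          (fun j : Fin (uar (some (c, i))) => σ j.1) ?_ hi
      · rw [he]; exact Subterm.refl _
      · show (fiT c i).subst σ = _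
        rfl
  | congr f ts i u _ ih =>
      intro hU
      exact ih (UNF_subterm hU (Subterm.app f ts i _ (Subterm.refl _)))

lemma NF_of_UNF {aa : C → ℕ} {t : ATerm C} (h : UNF aa t) : NF (USys aa) t :=
  fun _ hr => not_UNF_of_rew hr h

lemma UNF_norm (aa : C → ℕ) (t : ATerm C) : UNF aa (norm aa t) := by
  induction t with
  | var x =>
      intro ts hsub c i us he
      rw [norm_var] at hsub
      cases hsub
  | app f ts ih =>
      match f with
      | some p =>
          rw [norm_some]
          intro us0 hsub c i us he
          cases hsub with
          | app _ _ j _ hsub' => exact ih j us0 hsub' c i us he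
      | none =>
          rw [norm_none]
          set A := norm aa (ts ⟨0, by simp [uar]⟩) with hA
          set B := norm aa (ts ⟨1, by simp [uar]⟩) with hB
          have ihA : UNF aa A := ih _
          have ihB : UNF aa B := ih _
          rcases napp_cases aa A B with ⟨c, j, vs, hAe, hj, he⟩ | ⟨he, hcond⟩
          · rw [he]
            intro us0 hsub c' i' us' he'
            cases hsub with
            | app _ _ k _ hsub' =>
                -- component is extApp vs B k
                have : Subterm (Term.app none us0) A ∨ Subterm (Term.app none us0) B := by
                  show Subterm _ A ∨ _
                  by_cases hk : (k : ℕ) < j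
                  · left
                    have hcomp : extApp vs B k = vs ⟨k.1, hk⟩ := dif_pos hk
                    rw [hcomp] at hsub'
                    rw [hAe]
                    exact Subterm.app (ar := uar) (some (c, j)) vs ⟨k.1, hk⟩ _ hsub'
                  · right
                    have hcomp : extApp vs B k = B := dif_neg hk
                    rwa [hcomp] at hsub'
                rcases this with h' | h'
                · exact ihA us0 h' c' i' us' he'
                · exact ihB us0 h' c' i' us' he'
          · rw [he]
            intro us0 hsub c' i' us' he'
            rcases subterm_appT_elim hsub with heq | h' | h'
            · -- root: us0 ⟨0⟩ = A
              have h0 : us0 ⟨0, by simp [uar]⟩ = A := by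
                have := congrArg (fun t : ATerm C =>
                  match t with
                  | .app none vs => vs ⟨0, by simp [uar]⟩
                  | t => t) heq
                simpa [appT] using this
              rw [h0] at he'
              exact hcond c' i' us' he'
            · exact ihA us0 h' c' i' us' he'
            · exact ihB us0 h' c' i' us' he'

lemma nf_norm (aa : C → ℕ) (t : ATerm C) : NF (USys aa) (norm aa t) :=
  NF_of_UNF (UNF_norm aa t)

lemma normTo_norm (aa : C → ℕ) (t : ATerm C) : NormTo (USys aa) t (norm aa t) :=
  ⟨rstar_norm aa t, nf_norm aa t⟩

/-! ### head extraction and injectivity of appT -/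

def headOf : ATerm C → Option (USig C)
  | .var _ => none
  | .app f _ => some f

lemma var_ne_appT (y : ℕ) (a b : ATerm C) : (Term.var y : ATerm C) ≠ appT a b := by
  intro h
  exact absurd (congrArg headOf h) (by simp [headOf, appT])

lemma appT_inj {a b a' b' : ATerm C} (h : appT a b = appT a' b') : a = a' ∧ b = b' := by
  constructor
  · have := congrArg (fun t : ATerm C =>
      match t with
      | .app none vs => vs ⟨0, by simp [uar]⟩
      | t => t) h
    simpa [appT] using this
  · have := congrArg (fun t : ATerm C =>
      match t with
      | .app none vs => vs ⟨1, by simp [uar]⟩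
      | t => t) h
    simpa [appT] using this

lemma appT_ne_app_some (a b : ATerm C) (p : C × ℕ) (ts : Fin (uar (some p)) → ATerm C) :
    appT a b ≠ Term.app (some p) ts := by
  intro h
  exact absurd (congrArg headOf h) (by simp [headOf, appT])

/-! ### applicative and head variable free terms -/

lemma applicative_subterm {t s : ATerm C} (h : ApplicativeT t) (hs : Subterm s t) :
    ApplicativeT s := fun u f ts hu he => h u f ts (subterm_trans hu hs) he

lemma applicative_var (x : ℕ) : ApplicativeT (Term.var x : ATerm C) := by
  intro u f ts hu he
  cases hu
  cases he

lemma applicative_appT {a b : ATerm C} (ha : ApplicativeT a) (hb : ApplicativeT b) :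
    ApplicativeT (appT a b) := by
  intro u f ts hu he
  rcases subterm_appT_elim hu with heq | h' | h'
  · subst heq
    have := congrArg headOf he
    simp only [headOf, appT] at this
    cases this
    trivial
  · exact ha u f ts h' he
  · exact hb u f ts h' he

lemma hvf_subterm {t s : ATerm C} (h : HeadVarFree t) (hs : Subterm s t) :
    HeadVarFree s := fun u hu x v he => h u (subterm_trans hu hs) x v he

lemma hvf_var (x : ℕ) : HeadVarFree (Term.var x : ATerm C) := by
  intro u hu y v
  cases hu
  exact var_ne_appT x (.var y) v

lemma hvf_appT {a b : ATerm C} (ha : HeadVarFree a) (hb : HeadVarFree b)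
    (hnv : ∀ y : ℕ, a ≠ .var y) : HeadVarFree (appT a b) := by
  intro u hu x v he
  rcases subterm_appT_elim hu with heq | h' | h'
  · subst heq
    exact hnv x (appT_inj he).1
  · exact ha u h' x v he
  · exact hb u h' x v he

/-! ### properties of the η-saturation -/

lemma subst_id {F V : Type} {ar : F → ℕ} (t : Term F ar V) :
    t.subst Term.var = t := by
  induction t with
  | var x => rfl
  | app f ts ih =>
      show Term.app f _ = _
      congr 1
      funext i
      exact ih i

lemma eta_props {aa : C → ℕ} {R : Set (ATerm C × ATerm C)}
    (hR : IsATRS R) (hl : LHVF R) {l r : ATerm C} (h : Eta aa R (l, r)) :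
    ApplicativeT l ∧ ApplicativeT r ∧ HeadVarFree l ∧ (∀ y : ℕ, l ≠ .var y) := by
  generalize hp : (l, r) = p at h
  induction h generalizing l r with
  | base p' hq =>
      cases hp
      obtain ⟨hnv, _, hal, har⟩ := hR _ hq
      exact ⟨hal, har, hl _ hq, hnv⟩
  | eta l' r' c n x _ _ _ _ _ ih =>
      obtain ⟨he1, he2⟩ := Prod.mk.injEq .. ▸ hp
      obtain ⟨hal, har, hhv, hnv⟩ := ih rfl
      subst he1; subst he2
      refine ⟨applicative_appT hal (applicative_var x),
        applicative_appT har (applicative_var x),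
        hvf_appT hhv (hvf_var x) hnv, fun y => (var_ne_appT y _ _).symm⟩

lemma eta_rew {aa : C → ℕ} {R : Set (ATerm C × ATerm C)} {l r : ATerm C}
    (h : Eta aa R (l, r)) : Rew R l r := by
  generalize hp : (l, r) = p at h
  induction h generalizing l r with
  | base p' hq =>
      cases hp
      have := Rew.rule (R := R) l r Term.var hq
      rwa [subst_id, subst_id] at this
  | eta l' r' c n x _ _ _ _ _ ih =>
      obtain ⟨he1, he2⟩ := Prod.mk.injEq .. ▸ hp
      subst he1; subst he2
      have hr : Rew R l' r' := ih rfl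
      have := Rew.congr_update (R := R)
        (f := (none : USig C))
        (ts := fun i => if i.1 = 0 then l' else Term.var x)
        (i := ⟨0, by simp [uar]⟩) (b := r') (appT_comp0 _ _) hr
      rwa [show Function.update (fun i : Fin (uar (none : USig C)) =>
          if i.1 = 0 then l' else Term.var x) ⟨0, by simp [uar]⟩ r'
          = fun i => if i.1 = 0 then r' else Term.var x from by
        funext j
        match j with
        | ⟨0, _⟩ => simp
        | ⟨1, _⟩ =>
            rw [Function.update_of_ne (fun hh => absurd (congrArg Fin.val hh) (by norm_num))]
            simp] at this

/-! ### norm commutes with substitution on head variable free terms -/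

lemma napp_subst {aa : C → ℕ} {g : USig C} {vs : Fin (uar g) → ATerm C}
    (w : ATerm C) (ν : ℕ → ATerm C) :
    napp aa ((Term.app g vs).subst ν) (w.subst ν) = (napp aa (Term.app g vs) w).subst ν := by
  have hsub : (Term.app g vs).subst ν = Term.app g (fun j => (vs j).subst ν) := rfl
  match g with
  | none => rw [hsub, napp_none, napp_none, appT_subst, hsub]
  | some (c, i) =>
      rw [hsub, napp_some, napp_some]
      by_cases h : i < aa c
      · rw [if_pos h, if_pos h]
        show _ = Term.app (some (c, i+1)) _
        congr 1
        funext j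
        show extApp (fun j => (vs j).subst ν) (w.subst ν) j = (extApp vs w j).subst ν
        unfold extApp
        by_cases hj : j.1 < uar (some (c, i))
        · rw [dif_pos hj, dif_pos hj]
        · rw [dif_neg hj, dif_neg hj]
      · rw [if_neg h, if_neg h, appT_subst, hsub]

lemma norm_subst {aa : C → ℕ} {t : ATerm C} (ha : ApplicativeT t) (hh : HeadVarFree t)
    (σ : ℕ → ATerm C) :
    norm aa (t.subst σ) = (norm aa t).subst (fun x => norm aa (σ x)) := by
  induction t with
  | var x => rfl
  | app f ts ih =>
      match f with
      | some (c, i) =>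
          have hi : i = 0 := ha _ (some (c, i)) ts (Subterm.refl _) rfl
          subst hi
          rw [show (Term.app (some (c, 0)) ts).subst σ
            = Term.app (some (c, 0)) (fun j => (ts j).subst σ) from rfl, norm_some, norm_some]
          show Term.app (some (c, 0)) _ = Term.app (some (c, 0)) _
          congr 1
          funext j
          exact absurd j.2 (by simp [uar])
      | none =>
          have h0 : ∀ i : Fin (uar (none : USig C)), ApplicativeT (ts i) ∧ HeadVarFree (ts i) :=
            fun i => ⟨applicative_subterm ha (Subterm.app none ts i _ (Subterm.refl _)),
              hvf_subterm hh (Subterm.app none ts i _ (Subterm.refl _))⟩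
          have e1 : (Term.app none ts).subst σ
              = Term.app (ar := uar) none (fun j => (ts j).subst σ) := rfl
          rw [e1, norm_none, norm_none]
          have i0 : (⟨0, by simp [uar]⟩ : Fin (uar (none : USig C))) = ⟨0, by simp [uar]⟩ := rfl
          have r0 := ih ⟨0, by simp [uar]⟩ (h0 _).1 (h0 _).2
          have r1 := ih ⟨1, by simp [uar]⟩ (h0 _).1 (h0 _).2
          rw [r0, r1]
          -- ts 0 is not a variable
          have hnv : ∀ y : ℕ, ts ⟨0, by simp [uar]⟩ ≠ .var y := by
            intro y hy
            refine hh (Term.app none ts) (Subterm.refl _) y (ts ⟨1, by simp [uar]⟩) ?_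
            rw [← hy]
            exact appT_eta ts
          -- hence norm of it is an app
          have : ∃ (g : USig C) (vs : Fin (uar g) → ATerm C),
              norm aa (ts ⟨0, by simp [uar]⟩) = Term.app g vs := by
            match hts : ts ⟨0, by simp [uar]⟩ with
            | .var y => exact absurd hts (hnv y)
            | .app (some p) us => exact ⟨some p, _, by rw [norm_some]⟩
            | .app none us =>
                rw [norm_none]
                rcases napp_cases aa (norm aa (us ⟨0, by simp [uar]⟩))
                    (norm aa (us ⟨1, by simp [uar]⟩)) with ⟨c, j, vs, _, _, he⟩ | ⟨he, _⟩
                · exact ⟨some (c, j + 1), _, he⟩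
                · exact ⟨none, _, he⟩
          obtain ⟨g, vs, hg⟩ := this
          rw [hg]
          exact napp_subst _ _

/-! ### head shape of normalized head variable free terms -/

lemma head_shape {aa : C → ℕ} {l : ATerm C} (ha : ApplicativeT l) (hh : HeadVarFree l)
    (hnv : ∀ y : ℕ, l ≠ .var y) :
    ∃ (c : C) (n : ℕ), headCount l = some (c, n) ∧
      ((n ≤ aa c ∧ ∃ us : Fin (uar (some (c, n))) → ATerm C,
          norm aa l = .app (some (c, n)) us) ∨
        (aa c < n ∧ ∃ a b : ATerm C, norm aa l = appT a b)) := by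
  induction l with
  | var x => exact absurd rfl (hnv x)
  | app f ts ih =>
      match f with
      | some (c, i) =>
          have hi : i = 0 := ha _ (some (c, i)) ts (Subterm.refl _) rfl
          subst hi
          refine ⟨c, 0, rfl, Or.inl ⟨Nat.zero_le _, fun j => norm aa (ts j), ?_⟩⟩
          rw [norm_some]
      | none =>
          set t0 := ts ⟨0, by simp [uar]⟩ with ht0
          set t1 := ts ⟨1, by simp [uar]⟩ with ht1
          have hnv0 : ∀ y : ℕ, t0 ≠ .var y := by
            intro y hy
            refine hh (Term.app none ts) (Subterm.refl _) y t1 ?_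
            rw [← hy, ht0, ht1]
            exact appT_eta ts
          have hsub0 : Subterm t0 (Term.app none ts) :=
            Subterm.app none ts ⟨0, by simp [uar]⟩ _ (Subterm.refl _)
          obtain ⟨c, m, hhc, hsh⟩ := ih ⟨0, by simp [uar]⟩
            (applicative_subterm ha hsub0) (hvf_subterm hh hsub0) hnv0
          have hhcl : headCount (Term.app (ar := uar) none ts) = some (c, m + 1) := by
            rw [headCount, ← ht0, hhc]
            rfl
          refine ⟨c, m + 1, hhcl, ?_⟩
          rw [norm_none, ← ht0, ← ht1]
          rcases hsh with ⟨hm, us, hn0⟩ | ⟨hm, a, b, hn0⟩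
          · by_cases hlt : m < aa c
            · left
              refine ⟨hlt, extApp us (norm aa t1), ?_⟩
              rw [hn0, napp_some, if_pos hlt]
            · right
              refine ⟨by omega, Term.app (some (c, m)) us, norm aa t1, ?_⟩
              rw [hn0, napp_some, if_neg hlt]
          · right
            refine ⟨by omega, appT a b, norm aa t1, ?_⟩
            rw [hn0]
            rw [show appT a b = Term.app (ar := uar) none
              (fun i => if i.1 = 0 then a else b) from rfl, napp_none]

/-! ### application lists -/

def listApp (a : ATerm C) (ws : List (ATerm C)) : ATerm C := ws.foldl appT a

@[simp] lemma listApp_nil (a : ATerm C) : listApp a [] = a := rfl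

@[simp] lemma listApp_cons (a w : ATerm C) (ws : List (ATerm C)) :
    listApp a (w :: ws) = listApp (appT a w) ws := rfl

lemma norm_listApp (aa : C → ℕ) (a : ATerm C) (ws : List (ATerm C)) :
    norm aa (listApp a ws) = (ws.map (norm aa)).foldl (napp aa) (norm aa a) := by
  induction ws generalizing a with
  | nil => rfl
  | cons w ws ih =>
      rw [listApp_cons, ih, List.map_cons, List.foldl_cons, norm_appT]

lemma rew_appT_left {S : Set (ATerm C × ATerm C)} {a b : ATerm C} (w : ATerm C)
    (h : Rew S a b) : Rew S (appT a w) (appT b w) := by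
  have := Rew.congr_update (R := S) (f := (none : USig C))
    (ts := fun i => if i.1 = 0 then a else w) (i := ⟨0, by simp [uar]⟩)
    (appT_comp0 _ _) h
  rwa [show Function.update (fun i : Fin (uar (none : USig C)) =>
      if i.1 = 0 then a else w) ⟨0, by simp [uar]⟩ b = fun i => if i.1 = 0 then b else w from by
    funext j
    match j with
    | ⟨0, _⟩ => simp
    | ⟨1, _⟩ =>
        rw [Function.update_of_ne (fun hh => absurd (congrArg Fin.val hh) (by norm_num))]
        simp] at this

lemma rew_appT_right {S : Set (ATerm C × ATerm C)} {a b : ATerm C} (w : ATerm C)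
    (h : Rew S a b) : Rew S (appT w a) (appT w b) := by
  have := Rew.congr_update (R := S) (f := (none : USig C))
    (ts := fun i => if i.1 = 0 then w else a) (i := ⟨1, by simp [uar]⟩)
    (appT_comp1 _ _) h
  rwa [show Function.update (fun i : Fin (uar (none : USig C)) =>
      if i.1 = 0 then w else a) ⟨1, by simp [uar]⟩ b = fun i => if i.1 = 0 then w else b from by
    funext j
    match j with
    | ⟨0, _⟩ =>
        rw [Function.update_of_ne (fun hh => absurd (congrArg Fin.val hh) (by norm_num))]
        simp
    | ⟨1, _⟩ => simp] at this

lemma rew_listApp {S : Set (ATerm C × ATerm C)} {a b : ATerm C} (ws : List (ATerm C))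
    (h : Rew S a b) : Rew S (listApp a ws) (listApp b ws) := by
  induction ws generalizing a b with
  | nil => exact h
  | cons w ws ih => exact ih (rew_appT_left w h)

lemma rstar_appT {S : Set (ATerm C × ATerm C)} {a a' b b' : ATerm C}
    (h1 : RStar S a a') (h2 : RStar S b b') : RStar S (appT a b) (appT a' b') := by
  refine RStar.app_all (f := (none : USig C)) ?_
  intro i
  by_cases hi : (i : ℕ) = 0
  · simpa [hi] using h1
  · simpa [hi] using h2

lemma rstar_listApp_norm {aa : C → ℕ} {a a' : ATerm C} (ws : List (ATerm C))
    (h : RStar (USys aa) a a') :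
    RStar (USys aa) (listApp a ws) (listApp a' (ws.map (norm aa))) := by
  induction ws generalizing a a' with
  | nil => exact h
  | cons w ws ih =>
      rw [listApp_cons, List.map_cons, listApp_cons]
      exact ih (rstar_appT h (rstar_norm aa w))

/-! ### non-absorbing terms -/

def NA (aa : C → ℕ) (x : ATerm C) : Prop := ∀ w, napp aa x w = appT x w

lemma NA_appT (aa : C → ℕ) (a b : ATerm C) : NA aa (appT a b) := fun w => rfl

lemma foldl_napp_of_NA {aa : C → ℕ} {x : ATerm C} (h : NA aa x) (L : List (ATerm C)) :
    L.foldl (napp aa) x = listApp x L := by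
  induction L generalizing x with
  | nil => rfl
  | cons w L ih =>
      rw [List.foldl_cons, h w]
      exact ih (NA_appT aa x w)

/-! ### function update helpers on Fin 2 -/

lemma update0 (a w b : ATerm C) :
    Function.update (fun i : Fin (uar (none : USig C)) => if i.1 = 0 then a else w)
      ⟨0, by simp [uar]⟩ b = fun i => if i.1 = 0 then b else w := by
  funext j
  match j with
  | ⟨0, _⟩ => simp
  | ⟨1, _⟩ =>
      rw [Function.update_of_ne (fun hh => absurd (congrArg Fin.val hh) (by norm_num))]
      simp

lemma update1 (w a b : ATerm C) :
    Function.update (fun i : Fin (uar (none : USig C)) => if i.1 = 0 then w else a)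
      ⟨1, by simp [uar]⟩ b = fun i => if i.1 = 0 then w else b := by
  funext j
  match j with
  | ⟨0, _⟩ =>
      rw [Function.update_of_ne (fun hh => absurd (congrArg Fin.val hh) (by norm_num))]
      simp
  | ⟨1, _⟩ => simp

/-! ### the Q relation: one changed argument, TransGen inside -/

def QRel (S : Set (ATerm C × ATerm C)) (x y : ATerm C) : Prop :=
  ∃ (f : USig C) (vs : Fin (uar f) → ATerm C) (i : Fin (uar f)) (b : ATerm C),
    x = .app f vs ∧ y = .app f (Function.update vs i b) ∧
    Relation.TransGen (Rew S) (vs i) b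

lemma qrel_step {S : Set (ATerm C × ATerm C)} {x y : ATerm C} (h : QRel S x y) :
    Relation.TransGen (Rew S) x y := by
  obtain ⟨f, vs, i, b, hx, hy, htg⟩ := h
  subst hx; subst hy
  exact TransGen.congr_lift htg

lemma qrel_appT_left {S : Set (ATerm C × ATerm C)} {x y : ATerm C} (w : ATerm C)
    (h : Relation.TransGen (Rew S) x y) : QRel S (appT x w) (appT y w) :=
  ⟨none, fun k => if k.1 = 0 then x else w, ⟨0, by simp [uar]⟩, y, rfl,
    by rw [update0]; rfl, by rw [appT_comp0]; exact h⟩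

lemma qrel_appT_right {S : Set (ATerm C × ATerm C)} (w : ATerm C) {x y : ATerm C}
    (h : Relation.TransGen (Rew S) x y) : QRel S (appT w x) (appT w y) :=
  ⟨none, fun k => if k.1 = 0 then w else x, ⟨1, by simp [uar]⟩, y, rfl,
    by rw [update1]; rfl, by rw [appT_comp1]; exact h⟩

lemma qrel_napp {S : Set (ATerm C × ATerm C)} {aa : C → ℕ} {x y : ATerm C}
    (h : QRel S x y) (w : ATerm C) : QRel S (napp aa x w) (napp aa y w) := by
  obtain ⟨f, vs, i, b, hx, hy, htg⟩ := h
  subst hx; subst hy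
  match f with
  | none =>
      rw [napp_none, napp_none]
      exact qrel_appT_left w (qrel_step ⟨none, vs, i, b, rfl, rfl, htg⟩)
  | some (c, j) =>
      have hi : (i : ℕ) < j := i.2
      by_cases hj : j < aa c
      · rw [napp_some, napp_some, if_pos hj, if_pos hj]
        refine ⟨some (c, j + 1), extApp vs w, ⟨i.1, show (i : ℕ) < j + 1 by omega⟩, b, rfl, ?_, ?_⟩
        · congr 1
          funext k
          by_cases hk : k = (⟨i.1, show (i : ℕ) < j + 1 by omega⟩ : Fin (j + 1))
          · subst hk
            refine Eq.trans ?_ (Function.update_self (⟨i.1, by omega⟩ : Fin (j + 1)) b (extApp vs w)).symm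
            show (if h : (i : ℕ) < j then Function.update vs i b ⟨i.1, h⟩ else w) = b
            rw [dif_pos hi]
            rw [show (⟨i.1, hi⟩ : Fin (uar (some (c, j)))) = i from rfl, Function.update_self]
          · refine Eq.trans ?_ (Function.update_of_ne hk b (extApp vs w)).symm
            show (if h : (k : ℕ) < j then Function.update vs i b ⟨k.1, h⟩ else w)
              = (if h : (k : ℕ) < j then vs ⟨k.1, h⟩ else w)
            by_cases hk2 : (k : ℕ) < j
            · rw [dif_pos hk2, dif_pos hk2]
              rw [Function.update_of_ne]
              intro hh
              exact hk (Fin.ext (show (k : ℕ) = i.1 from congrArg Fin.val hh))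
            · rw [dif_neg hk2, dif_neg hk2]
        · show Relation.TransGen (Rew S)
            (if h : (i : ℕ) < j then vs ⟨i.1, h⟩ else w) b
          rw [dif_pos hi]
          rw [show (⟨i.1, hi⟩ : Fin (uar (some (c, j)))) = i from rfl]
          exact htg
      · rw [napp_some, napp_some, if_neg hj, if_neg hj]
        exact qrel_appT_left w (qrel_step ⟨some (c, j), vs, i, b, rfl, rfl, htg⟩)

lemma qrel_foldl {S : Set (ATerm C × ATerm C)} {aa : C → ℕ} {x y : ATerm C}
    (h : QRel S x y) (L : List (ATerm C)) :
    Relation.TransGen (Rew S) (L.foldl (napp aa) x) (L.foldl (napp aa) y) := by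
  induction L generalizing x y with
  | nil => exact qrel_step h
  | cons w L ih => exact ih (qrel_napp h w)

/-- `napp` with only the second argument changed -/
lemma qrel_napp_right {S : Set (ATerm C × ATerm C)} {aa : C → ℕ} (x : ATerm C) {b b' : ATerm C}
    (htg : Relation.TransGen (Rew S) b b') : QRel S (napp aa x b) (napp aa x b') := by
  rcases napp_cases aa x b with ⟨c, j, us, hx, hj, he⟩ | ⟨he, hcond⟩
  · subst hx
    rw [he, napp_some aa c j us b', if_pos hj]
    refine ⟨some (c, j + 1), extApp us b, ⟨j, show j < j + 1 by omega⟩, b', rfl, ?_, ?_⟩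
    · congr 1
      funext k
      by_cases hk : k = (⟨j, show j < j + 1 by omega⟩ : Fin (j + 1))
      · subst hk
        refine Eq.trans ?_ (Function.update_self (⟨j, by omega⟩ : Fin (j + 1)) b' (extApp us b)).symm
        show (if h : (j : ℕ) < j then us ⟨j, h⟩ else b') = b'
        rw [dif_neg (by omega)]
      · refine Eq.trans ?_ (Function.update_of_ne hk b' (extApp us b)).symm
        have hk2 : (k : ℕ) < j := by
          rcases Nat.lt_succ_iff_lt_or_eq.mp k.2 with h' | h'
          · exact h'
          · exact absurd (Fin.ext h') hk
        show (if h : (k : ℕ) < j then us ⟨k.1, h⟩ else b')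
          = (if h : (k : ℕ) < j then us ⟨k.1, h⟩ else b)
        rw [dif_pos hk2, dif_pos hk2]
    · show Relation.TransGen (Rew S) (if h : (j : ℕ) < j then us ⟨j, h⟩ else b) b'
      rw [dif_neg (by omega)]
      exact htg
  · rw [he]
    have he' : napp aa x b' = appT x b' := by
      rcases napp_cases aa x b' with ⟨c, j, us, hx, hj, _⟩ | ⟨he', _⟩
      · exact absurd hj (hcond c j us hx)
      · exact he'
    rw [he']
    exact qrel_appT_right x htg

lemma tg_rstar {α : Type*} {r : α → α → Prop} {a b c : α}
    (h1 : Relation.TransGen r a b) (h2 : Relation.ReflTransGen r b c) :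
    Relation.TransGen r a c := by
  induction h2 with
  | refl => exact h1
  | tail _ hstep ih => exact ih.tail hstep

lemma rstar_mono {F V : Type} {ar : F → ℕ} {S S' : Set (Term F ar V × Term F ar V)}
    (h : S ⊆ S') {s t : Term F ar V} (hst : RStar S s t) : RStar S' s t :=
  Relation.ReflTransGen.mono (fun _ _ hab => Rew.mono h hab) _ _ hst

lemma USys_sub_UD (aa : C → ℕ) (R : Set (ATerm C × ATerm C)) : USys aa ⊆ UD aa R :=
  fun _ hp => Or.inr hp

/-! ### the key simulation for rule applications -/

lemma rule_case {aa : C → ℕ} {R : Set (ATerm C × ATerm C)}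
    (hR : IsATRS R) (hl : LHVF R) :
    ∀ (ws : List (ATerm C)) (l r : ATerm C), Eta aa R (l, r) → ∀ σ : ℕ → ATerm C,
      Relation.TransGen (Rew (UD aa R))
        (norm aa (listApp (l.subst σ) ws)) (norm aa (listApp (r.subst σ) ws)) := by
  intro ws
  induction ws with
  | nil =>
      intro l r h σ
      obtain ⟨hal, har, hhv, hnv⟩ := eta_props hR hl h
      have hmem : (norm aa l, norm aa r) ∈ UD aa R :=
        Or.inl ⟨l, r, h, normTo_norm aa l, normTo_norm aa r⟩
      set ν : ℕ → ATerm C := fun x => norm aa (σ x) with hν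
      have step : Rew (UD aa R) ((norm aa l).subst ν) ((norm aa r).subst ν) :=
        Rew.rule _ _ ν hmem
      have e1 : norm aa (l.subst σ) = (norm aa l).subst ν := norm_subst hal hhv σ
      have h1 : RStar (USys aa) (r.subst σ) ((norm aa r).subst ν) :=
        (RStar.subst_closed (rstar_norm aa r) σ).trans
          (RStar.subst_pointwise _ (fun x => rstar_norm aa (σ x)))
      have e2 : norm aa ((norm aa r).subst ν) = norm aa (r.subst σ) := (rstar_U_norm h1).symm
      rw [listApp_nil, listApp_nil, e1]
      refine tg_rstar (Relation.TransGen.single step) ?_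
      rw [← e2]
      exact rstar_mono (USys_sub_UD aa R) (rstar_norm aa _)
  | cons w ws ih =>
      intro l r h σ
      obtain ⟨hal, har, hhv, hnv⟩ := eta_props hR hl h
      obtain ⟨c, n, hhc, hsh⟩ := head_shape (aa := aa) hal hhv hnv
      by_cases hn : n < aa c
      · -- η-expand the rule and recurse with a shorter stack
        set x := max (varBound l) (varBound r) with hx
        have hfl : ¬ Subterm (.var x) l := not_subterm_varBound l (le_max_left _ _)
        have hfr : ¬ Subterm (.var x) r := not_subterm_varBound r (le_max_right _ _)
        have h' : Eta aa R (appT l (.var x), appT r (.var x)) :=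
          Eta.eta l r c n x h hhc hn hfl hfr
        set σ' : ℕ → ATerm C := fun y => if y = x then w else σ y with hσ'
        have cl : l.subst σ' = l.subst σ :=
          subst_eq_on l (fun y hy => if_neg (fun hyx => hfl (by rwa [hyx] at hy)))
        have cr : r.subst σ' = r.subst σ :=
          subst_eq_on r (fun y hy => if_neg (fun hyx => hfr (by rwa [hyx] at hy)))
        have cx : (Term.var x : ATerm C).subst σ' = w := by
          show σ' x = w
          simp [hσ']
        have el : (appT l (.var x)).subst σ' = appT (l.subst σ) w := by
          rw [appT_subst, cl, cx]
        have er : (appT r (.var x)).subst σ' = appT (r.subst σ) w := by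
          rw [appT_subst, cr, cx]
        have := ih (appT l (.var x)) (appT r (.var x)) h' σ'
        rw [el, er] at this
        rw [listApp_cons, listApp_cons]
        exact this
      · -- head does not absorb: rewrite under the whole application list
        have hmem : (norm aa l, norm aa r) ∈ UD aa R :=
          Or.inl ⟨l, r, h, normTo_norm aa l, normTo_norm aa r⟩
        set ν : ℕ → ATerm C := fun y => norm aa (σ y) with hν
        have e1 : norm aa (l.subst σ) = (norm aa l).subst ν := norm_subst hal hhv σ
        have hNA : NA aa ((norm aa l).subst ν) := by
          intro w'
          rcases napp_cases aa ((norm aa l).subst ν) w' with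
            ⟨c', j, us', hx', hj, _⟩ | ⟨he, _⟩
          · exfalso
            rcases hsh with ⟨hle, us, hn0⟩ | ⟨hgt, a, b, hn0⟩
            · have hsub : (norm aa l).subst ν
                  = Term.app (some (c, n)) (fun k => (us k).subst ν) := by rw [hn0]; rfl
              have hhead := congrArg headOf (hsub.symm.trans hx')
              simp only [headOf] at hhead
              have : (c, n) = (c', j) := by
                have := Option.some.inj hhead
                exact Option.some.inj this
              obtain ⟨hc, hn'⟩ := Prod.mk.injEq .. ▸ this
              subst hc; subst hn'
              exact hn hj
            · have hsub : (norm aa l).subst ν = appT (a.subst ν) (b.subst ν) := by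
                rw [hn0, appT_subst]
              have hhead := congrArg headOf (hsub.symm.trans hx')
              simp only [headOf, appT] at hhead
              exact absurd (Option.some.inj hhead) (by simp)
          · exact he
        set L := (w :: ws).map (norm aa) with hL
        have e2 : norm aa (listApp (l.subst σ) (w :: ws)) = listApp ((norm aa l).subst ν) L := by
          rw [norm_listApp, e1, foldl_napp_of_NA hNA]
        have step : Rew (UD aa R)
            (listApp ((norm aa l).subst ν) L) (listApp ((norm aa r).subst ν) L) :=
          rew_listApp L (Rew.rule _ _ ν hmem)
        have h1 : RStar (USys aa) (r.subst σ) ((norm aa r).subst ν) :=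
          (RStar.subst_closed (rstar_norm aa r) σ).trans
            (RStar.subst_pointwise _ (fun y => rstar_norm aa (σ y)))
        have h2 : RStar (USys aa) (listApp (r.subst σ) (w :: ws))
            (listApp ((norm aa r).subst ν) L) := rstar_listApp_norm (w :: ws) h1
        have e3 : norm aa (listApp ((norm aa r).subst ν) L)
            = norm aa (listApp (r.subst σ) (w :: ws)) := (rstar_U_norm h2).symm
        rw [e2]
        refine tg_rstar (Relation.TransGen.single step) ?_
        rw [← e3]
        exact rstar_mono (USys_sub_UD aa R) (rstar_norm aa _)

/-! ### the main simulation lemma -/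

lemma main_step {aa : C → ℕ} {R : Set (ATerm C × ATerm C)}
    (hR : IsATRS R) (hl : LHVF R) {s t : ATerm C}
    (h : Rew {p | Eta aa R p} s t) :
    ∀ ws : List (ATerm C),
      Relation.TransGen (Rew (UD aa R))
        (norm aa (listApp s ws)) (norm aa (listApp t ws)) := by
  induction h with
  | rule l r σ hm => exact fun ws => rule_case hR hl ws l r hm σ
  | congr f ts i u hu ih =>
      intro ws
      match f with
      | none =>
          match i with
          | ⟨0, h0⟩ =>
              have es : Term.app (ar := uar) none ts
                  = appT (ts ⟨0, by simp [uar]⟩) (ts ⟨1, by simp [uar]⟩) := appT_eta ts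
              have et : Term.app (ar := uar) none (Function.update ts ⟨0, h0⟩ u)
                  = appT u (ts ⟨1, by simp [uar]⟩) := by
                rw [appT_eta (Function.update ts ⟨0, h0⟩ u)]
                rw [show (Function.update ts ⟨0, h0⟩ u) ⟨0, by simp [uar]⟩ = u from
                  Function.update_self _ _ _]
                rw [show (Function.update ts ⟨0, h0⟩ u) ⟨1, by simp [uar]⟩
                    = ts ⟨1, by simp [uar]⟩ from
                  Function.update_of_ne (fun hh => absurd (congrArg Fin.val hh) (by norm_num)) _ _]
              rw [es, et]
              have := ih (ts ⟨1, by simp [uar]⟩ :: ws)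
              rw [listApp_cons] at this
              rw [show (⟨0, by simp [uar]⟩ : Fin (uar (none : USig C))) = ⟨0, h0⟩ from rfl]
              exact this
          | ⟨1, h1⟩ =>
              have es : Term.app (ar := uar) none ts
                  = appT (ts ⟨0, by simp [uar]⟩) (ts ⟨1, by simp [uar]⟩) := appT_eta ts
              have et : Term.app (ar := uar) none (Function.update ts ⟨1, h1⟩ u)
                  = appT (ts ⟨0, by simp [uar]⟩) u := by
                rw [appT_eta (Function.update ts ⟨1, h1⟩ u)]
                rw [show (Function.update ts ⟨1, h1⟩ u) ⟨0, by simp [uar]⟩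
                    = ts ⟨0, by simp [uar]⟩ from
                  Function.update_of_ne (fun hh => absurd (congrArg Fin.val hh) (by norm_num)) _ _]
                rw [show (Function.update ts ⟨1, h1⟩ u) ⟨1, by simp [uar]⟩ = u from
                  Function.update_self _ _ _]
              rw [es, et, norm_listApp, norm_listApp, norm_appT, norm_appT]
              refine qrel_foldl ?_ (ws.map (norm aa))
              refine qrel_napp_right _ ?_
              have := ih []
              rw [listApp_nil, listApp_nil] at this
              rw [show (⟨1, by simp [uar]⟩ : Fin (uar (none : USig C))) = ⟨1, h1⟩ from rfl]
              exact this
      | some p =>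
          rw [norm_listApp, norm_listApp, norm_some, norm_some]
          refine qrel_foldl ?_ (ws.map (norm aa))
          refine ⟨some p, fun j => norm aa (ts j), i, norm aa u, rfl, ?_, ?_⟩
          · congr 1
            funext j
            by_cases hj : j = i
            · subst hj
              rw [Function.update_self, Function.update_self]
            · rw [Function.update_of_ne hj, Function.update_of_ne hj]
          · have := ih []
            rw [listApp_nil, listApp_nil] at this
            exact this

/-! ### direction A: termination of U↓(R) implies termination of R -/

lemma dirA {aa : C → ℕ} {R : Set (ATerm C × ATerm C)}
    (hR : IsATRS R) (hl : LHVF R) (hUD : Terminating (UD aa R)) : Terminating R := by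
  have h1 : WellFounded (Relation.TransGen (fun t s : ATerm C => Rew (UD aa R) s t)) :=
    hUD.transGen
  have wfT : WellFounded (fun t s : ATerm C => Relation.TransGen (Rew (UD aa R)) s t) :=
    Subrelation.wf (fun h => Relation.TransGen.swap _ _ h) h1
  refine Subrelation.wf (q := fun t s => Rew R s t) ?_ (InvImage.wf (norm aa) wfT)
  intro t s h
  have h' : Rew {p | Eta aa R p} s t := Rew.mono (fun p hp => Eta.base p hp) h
  have := main_step hR hl h' []
  rw [listApp_nil, listApp_nil] at this
  exact this

/-! ### direction B: curryId mapping -/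

lemma constT_subst (c : C) (ν : ℕ → ATerm C) : (constT c).subst ν = constT c := by
  show Term.app (some (c, 0)) _ = _
  congr 1
  funext i
  exact absurd (show (i : ℕ) < 0 from i.2) (Nat.not_lt_zero _)

lemma foldl_appT_subst (s : ATerm C) (L : List (ATerm C)) (ν : ℕ → ATerm C) :
    (L.foldl appT s).subst ν = (L.map (fun t => t.subst ν)).foldl appT (s.subst ν) := by
  induction L generalizing s with
  | nil => rfl
  | cons w L ih =>
      rw [List.foldl_cons, List.map_cons, List.foldl_cons, ih, appT_subst]

lemma curryId_none (ts : Fin (uar (none : USig C)) → ATerm C) :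
    curryId (Term.app none ts)
      = appT (curryId (ts ⟨0, by simp [uar]⟩)) (curryId (ts ⟨1, by simp [uar]⟩)) := by
  rw [curryId]

lemma curryId_some (c : C) (i : ℕ) (ts : Fin (uar (some (c, i))) → ATerm C) :
    curryId (Term.app (some (c, i)) ts)
      = (List.ofFn (fun j : Fin (uar (some (c, i))) => curryId (ts j))).foldl appT (constT c) := by
  rw [curryId]

lemma curryId_appT (a b : ATerm C) :
    curryId (appT a b) = appT (curryId a) (curryId b) := by
  rw [show appT a b = Term.app none (fun i => if i.1 = 0 then a else b) from rfl, curryId_none]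
  norm_num

lemma curryId_subst (t : ATerm C) (ν : ℕ → ATerm C) :
    curryId (t.subst ν) = (curryId t).subst (fun x => curryId (ν x)) := by
  induction t with
  | var x => rfl
  | app f ts ih =>
      match f with
      | none =>
          rw [show (Term.app (ar := uar) none ts).subst ν
            = Term.app none (fun j => (ts j).subst ν) from rfl, curryId_none, curryId_none,
            appT_subst, ih ⟨0, by simp [uar]⟩, ih ⟨1, by simp [uar]⟩]
      | some (c, i) =>
          rw [show (Term.app (some (c, i)) ts).subst ν
            = Term.app (some (c, i)) (fun j => (ts j).subst ν) from rfl,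
            curryId_some, curryId_some, foldl_appT_subst, constT_subst, List.map_ofFn]
          exact congrArg _ (congrArg List.ofFn (funext fun j => ih j))

lemma curryId_applicative {t : ATerm C} (h : ApplicativeT t) : curryId t = t := by
  induction t with
  | var x => rfl
  | app f ts ih =>
      match f with
      | none =>
          rw [curryId_none,
            ih ⟨0, by simp [uar]⟩ (applicative_subterm h (Subterm.app none ts _ _ (Subterm.refl _))),
            ih ⟨1, by simp [uar]⟩ (applicative_subterm h (Subterm.app none ts _ _ (Subterm.refl _)))]
          exact (appT_eta ts).symm
      | some (c, i) =>
          have hi : i = 0 := h _ (some (c, i)) ts (Subterm.refl _) rfl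
          subst hi
          rw [curryId_some]
          have : List.ofFn (fun j : Fin (uar (some (c, 0))) => curryId (ts j)) = [] :=
            List.eq_nil_of_length_eq_zero (by rw [List.length_ofFn]; rfl)
          rw [this]
          show constT c = _
          show Term.app (some (c, 0)) _ = _
          congr 1
          funext j
          exact absurd j.2 (Nat.not_lt_zero _)

lemma curryId_fiT (c : C) (i : ℕ) :
    curryId (fiT c i)
      = (List.ofFn (fun j : Fin i => (Term.var j.1 : ATerm C))).foldl appT (constT c) := by
  rw [show fiT c i = Term.app (some (c, i)) (fun j : Fin (uar (some (c, i))) => Term.var j.1)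
    from rfl, curryId_some]
  rfl

lemma curryId_U_rule (aa : C → ℕ) (c : C) (i : ℕ) :
    curryId (appT (fiT c i) (.var i)) = curryId (fiT c (i + 1) : ATerm C) := by
  rw [curryId_appT, curryId_fiT, curryId_fiT]
  rw [show (List.ofFn (fun j : Fin (i + 1) => (Term.var j.1 : ATerm C)))
    = (List.ofFn (fun j : Fin i => (Term.var j.1 : ATerm C))).concat (Term.var i) from by
      rw [List.ofFn_succ' (fun j : Fin (i + 1) => (Term.var j.1 : ATerm C))]
      rfl]
  rw [List.concat_eq_append, List.foldl_concat]
  rfl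

lemma curryId_rew_U {aa : C → ℕ} {s t : ATerm C} (h : Rew (USys aa) s t) :
    curryId s = curryId t := by
  induction h with
  | rule l r σ hm =>
      obtain ⟨c, i, hi, hp⟩ := hm
      obtain ⟨hl, hr⟩ := Prod.mk.injEq .. ▸ hp
      subst hl; subst hr
      rw [curryId_subst, curryId_subst, curryId_U_rule aa]
  | congr f ts i u hu ih =>
      match f with
      | none =>
          rw [curryId_none, curryId_none]
          match i with
          | ⟨0, h0⟩ =>
              have e0 : (Function.update ts ⟨0, h0⟩ u) ⟨0, by simp [uar]⟩ = u :=
                Function.update_self _ _ _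
              have e1 : (Function.update ts ⟨0, h0⟩ u) ⟨1, by simp [uar]⟩
                  = ts ⟨1, by simp [uar]⟩ :=
                Function.update_of_ne
                  (fun hh => absurd (congrArg Fin.val hh) (by norm_num)) _ _
              rw [e0, e1]
              exact congrArg₂ appT ih rfl
          | ⟨1, h1⟩ =>
              have e0 : (Function.update ts ⟨1, h1⟩ u) ⟨0, by simp [uar]⟩
                  = ts ⟨0, by simp [uar]⟩ :=
                Function.update_of_ne
                  (fun hh => absurd (congrArg Fin.val hh) (by norm_num)) _ _
              have e1 : (Function.update ts ⟨1, h1⟩ u) ⟨1, by simp [uar]⟩ = u :=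
                Function.update_self _ _ _
              rw [e0, e1]
              exact congrArg₂ appT rfl ih
      | some (c, k) =>
          rw [curryId_some, curryId_some]
          congr 2
          funext j
          by_cases hj : j = i
          · subst hj; rw [Function.update_self]; exact ih
          · rw [Function.update_of_ne hj]

lemma curryId_rstar_U {aa : C → ℕ} {s t : ATerm C} (h : RStar (USys aa) s t) :
    curryId s = curryId t := by
  induction h with
  | refl => rfl
  | tail _ hstep ih => exact ih.trans (curryId_rew_U hstep)

lemma rew_ofFn_update {S : Set (ATerm C × ATerm C)} :
    ∀ {n : ℕ} (xs : Fin n → ATerm C) (i : Fin n) (b : ATerm C),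
      Rew S (xs i) b → ∀ s : ATerm C,
      Rew S (List.foldl appT s (List.ofFn xs))
        (List.foldl appT s (List.ofFn (Function.update xs i b))) := by
  intro n
  induction n with
  | zero => intro xs i; exact i.elim0
  | succ n ihn =>
      intro xs i b h s
      rw [List.ofFn_succ' xs, List.ofFn_succ' (Function.update xs i b),
        List.concat_eq_append, List.concat_eq_append, List.foldl_concat, List.foldl_concat]
      by_cases hi : i = Fin.last n
      · subst hi
        have hcs : (fun k : Fin n => Function.update xs (Fin.last n) b k.castSucc)
            = fun k => xs k.castSucc :=
          funext fun k => Function.update_of_ne (Fin.castSucc_lt_last k).ne _ _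
        rw [hcs, Function.update_self]
        exact rew_appT_right _ h
      · have hlt : (i : ℕ) < n := by
          have h1 : (i : ℕ) ≠ n := fun hh => hi (Fin.ext (by simp [hh]))
          have h2 : (i : ℕ) < n + 1 := i.2
          omega
        set i' : Fin n := ⟨i.1, hlt⟩ with hi'
        have hci' : i'.castSucc = i := Fin.ext rfl
        have hlast : Function.update xs i b (Fin.last n) = xs (Fin.last n) :=
          Function.update_of_ne (fun hh => hi hh.symm) _ _
        have hcs : (fun k : Fin n => Function.update xs i b k.castSucc)
            = Function.update (fun k : Fin n => xs k.castSucc) i' b := by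
          funext k
          by_cases hk : k = i'
          · subst hk
            rw [hci', Function.update_self, Function.update_self]
          · rw [Function.update_of_ne (fun hh => hk (Fin.ext (by
              have := congrArg Fin.val hh
              simpa using this))), Function.update_of_ne hk]
        rw [hcs, hlast]
        refine rew_appT_left _ ?_
        refine ihn (fun k => xs k.castSucc) i' b ?_ s
        show Rew S (xs i'.castSucc) b
        rw [hci']
        exact h

lemma curryId_congr_eq {f : USig C} (ts : Fin (uar f) → ATerm C) (i : Fin (uar f))
    (u : ATerm C) (he : curryId (ts i) = curryId u) :
    curryId (Term.app f ts) = curryId (Term.app f (Function.update ts i u)) := by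
  match f with
  | none =>
      rw [curryId_none, curryId_none]
      match i with
      | ⟨0, h0⟩ =>
          have e0 : (Function.update ts ⟨0, h0⟩ u) ⟨0, by simp [uar]⟩ = u :=
            Function.update_self _ _ _
          have e1 : (Function.update ts ⟨0, h0⟩ u) ⟨1, by simp [uar]⟩
              = ts ⟨1, by simp [uar]⟩ :=
            Function.update_of_ne
              (fun hh => absurd (congrArg Fin.val hh) (by norm_num)) _ _
          rw [e0, e1]
          exact congrArg₂ appT he rfl
      | ⟨1, h1⟩ =>
          have e0 : (Function.update ts ⟨1, h1⟩ u) ⟨0, by simp [uar]⟩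
              = ts ⟨0, by simp [uar]⟩ :=
            Function.update_of_ne
              (fun hh => absurd (congrArg Fin.val hh) (by norm_num)) _ _
          have e1 : (Function.update ts ⟨1, h1⟩ u) ⟨1, by simp [uar]⟩ = u :=
            Function.update_self _ _ _
          rw [e0, e1]
          exact congrArg₂ appT rfl he
  | some (c, k) =>
      rw [curryId_some, curryId_some]
      refine congrArg _ (congrArg List.ofFn (funext fun j => ?_))
      by_cases hj : j = i
      · subst hj; rw [Function.update_self]; exact he
      · rw [Function.update_of_ne hj]

lemma curryId_step {aa : C → ℕ} {R : Set (ATerm C × ATerm C)} (hR : IsATRS R) (hl : LHVF R)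
    {s t : ATerm C} (h : Rew (UD aa R) s t) :
    Rew R (curryId s) (curryId t) ∨ (curryId s = curryId t ∧ Rew (USys aa) s t) := by
  induction h with
  | rule l' r' σ hm =>
      rcases hm with hE | hU
      · left
        obtain ⟨l, r, heta, ⟨hls, _⟩, ⟨hrs, _⟩⟩ := hE
        obtain ⟨hal, har, _, _⟩ := eta_props hR hl heta
        have el : curryId l' = l := (curryId_rstar_U hls).symm.trans (curryId_applicative hal)
        have er : curryId r' = r := (curryId_rstar_U hrs).symm.trans (curryId_applicative har)
        rw [curryId_subst, curryId_subst, el, er]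
        exact Rew.subst_closed (eta_rew heta) _
      · right
        exact ⟨curryId_rew_U (Rew.rule _ _ σ hU), Rew.rule _ _ σ hU⟩
  | congr f ts i u hu ih =>
      rcases ih with ihL | ⟨ihE, ihU⟩
      · left
        match f with
        | none =>
            rw [curryId_none, curryId_none]
            match i with
            | ⟨0, h0⟩ =>
                have e0 : (Function.update ts ⟨0, h0⟩ u) ⟨0, by simp [uar]⟩ = u :=
                  Function.update_self _ _ _
                have e1 : (Function.update ts ⟨0, h0⟩ u) ⟨1, by simp [uar]⟩
                    = ts ⟨1, by simp [uar]⟩ :=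
                  Function.update_of_ne
                    (fun hh => absurd (congrArg Fin.val hh) (by norm_num)) _ _
                rw [e0, e1]
                exact rew_appT_left _ ihL
            | ⟨1, h1⟩ =>
                have e0 : (Function.update ts ⟨1, h1⟩ u) ⟨0, by simp [uar]⟩
                    = ts ⟨0, by simp [uar]⟩ :=
                  Function.update_of_ne
                    (fun hh => absurd (congrArg Fin.val hh) (by norm_num)) _ _
                have e1 : (Function.update ts ⟨1, h1⟩ u) ⟨1, by simp [uar]⟩ = u :=
                  Function.update_self _ _ _
                rw [e0, e1]
                exact rew_appT_right _ ihL
        | some (c, k) =>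
            rw [curryId_some, curryId_some]
            have hfn : (List.ofFn fun j => curryId (Function.update ts i u j))
                = List.ofFn (Function.update (fun j => curryId (ts j)) i (curryId u)) := by
              refine congrArg List.ofFn (funext fun j => ?_)
              by_cases hj : j = i
              · subst hj; rw [Function.update_self, Function.update_self]
              · rw [Function.update_of_ne hj, Function.update_of_ne hj]
            rw [hfn]
            exact rew_ofFn_update (fun j => curryId (ts j)) i (curryId u) ihL (constT c)
      · right
        exact ⟨curryId_congr_eq ts i u ihE, Rew.congr f ts i u ihU⟩

lemma dirB {aa : C → ℕ} {R : Set (ATerm C × ATerm C)} (hR : IsATRS R) (hl : LHVF R)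
    (hT : Terminating R) : Terminating (UD aa R) := by
  have wfLex : WellFounded (Prod.Lex (fun a b : ATerm C => Rew R b a)
      (fun a b : ATerm C => Rew (USys aa) b a)) :=
    WellFounded.prod_lex hT (wf_U aa)
  refine Subrelation.wf (q := fun t s => Rew (UD aa R) s t) ?_
    (InvImage.wf (fun t => (curryId t, t)) wfLex)
  intro t s h
  rcases curryId_step hR hl h with hL | ⟨hE, hU⟩
  · exact Prod.Lex.left _ _ hL
  · show Prod.Lex _ _ (curryId t, t) (curryId s, s)
    rw [hE]
    exact Prod.Lex.right _ hU

end UC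
/-- a left head variable free ATRS `R` is terminating iff
`U↓(R) = R_η↓ ∪ U(R)` is terminating. -/
theorem uncurry_termination_iff {C : Type} (R : Set (ATerm C × ATerm C)) (aa : C → ℕ)
    (hR : IsATRS R) (hl : LHVF R) (haa : AASpec R aa) :
    Terminating R ↔ Terminating (UD aa R) :=
  ⟨fun h => UC.dirB hR hl h, fun h => UC.dirA hR hl h⟩
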